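/- The greatest clearing wealth map x ↦ V(x) is a Borel measurable function from ℝⁿ₊ to ℝⁿ. Consequently, for any random endowment vector X : Ω → ℝⁿ₊ (measurable on a probability space (Ω, 𝓕, ℙ)), the random vectors V(X), p(X) = p̄ − V(X)⁻ and E(X) = V(X)⁺ are measurable. -/

import Mathlib

open Matrix BigOperators MeasureTheory Filter Topology

noncomputable section

/-- Total liabilities `p̄_i = Σ_{j=1}^{n+1} L_{ij}`. -/
def pbar {n : ℕ} (L : Matrix (Fin n) (Fin (n + 1)) ℝ) (i : Fin n) : ℝ :=
  ∑ j, L i j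

/-- Relative liabilities `π_{ij} = L_{ij} / p̄_i` if `p̄_i > 0`, else `0`. -/
def relLiab {n : ℕ} (L : Matrix (Fin n) (Fin (n + 1)) ℝ) (i j : Fin n) : ℝ :=
  if 0 < pbar L i then L i j.castSucc / pbar L i else 0

/-- The clearing map in wealths `Ψ_x`. -/
def Psi {n : ℕ} (L : Matrix (Fin n) (Fin (n + 1)) ℝ) (αx αL : ℝ)
    (x V : Fin n → ℝ) (i : Fin n) : ℝ :=
  if 0 ≤ V i then
    x i + ∑ j, relLiab L j i * max (pbar L j - max (-(V j)) 0) 0 - pbar L i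
  else
    αx * x i + αL * ∑ j, relLiab L j i * max (pbar L j - max (-(V j)) 0) 0 - pbar L i

namespace ClearingAux

variable {n : ℕ} {L : Matrix (Fin n) (Fin (n + 1)) ℝ} {αx αL : ℝ}

/-- The interbank inflow sum. -/
def Sfun (L : Matrix (Fin n) (Fin (n + 1)) ℝ) (V : Fin n → ℝ) (i : Fin n) : ℝ :=
  ∑ j, relLiab L j i * max (pbar L j - max (-(V j)) 0) 0

lemma Psi_eq (x V : Fin n → ℝ) (i : Fin n) :
    Psi L αx αL x V i =
      if 0 ≤ V i then x i + Sfun L V i - pbar L i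
      else αx * x i + αL * Sfun L V i - pbar L i := rfl

lemma pbar_nonneg (hL : ∀ i j, 0 ≤ L i j) (i : Fin n) : 0 ≤ pbar L i :=
  Finset.sum_nonneg fun j _ => hL i j

lemma relLiab_nonneg (hL : ∀ i j, 0 ≤ L i j) (i j : Fin n) : 0 ≤ relLiab L i j := by
  unfold relLiab
  split
  · exact div_nonneg (hL i _) (le_of_lt ‹_›)
  · exact le_rfl

lemma Sfun_nonneg (hL : ∀ i j, 0 ≤ L i j) (V : Fin n → ℝ) (i : Fin n) :
    0 ≤ Sfun L V i :=
  Finset.sum_nonneg fun j _ => mul_nonneg (relLiab_nonneg hL j i) (le_max_right _ _)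

lemma Sfun_mono (hL : ∀ i j, 0 ≤ L i j) {V V' : Fin n → ℝ} (h : V ≤ V') (i : Fin n) :
    Sfun L V i ≤ Sfun L V' i := by
  refine Finset.sum_le_sum fun j _ => ?_
  refine mul_le_mul_of_nonneg_left ?_ (relLiab_nonneg hL j i)
  exact max_le_max (sub_le_sub_left (max_le_max (neg_le_neg (h j)) le_rfl) _) le_rfl

lemma Sfun_le (hL : ∀ i j, 0 ≤ L i j) (V : Fin n → ℝ) (i : Fin n) :
    Sfun L V i ≤ ∑ j, relLiab L j i * pbar L j := by
  refine Finset.sum_le_sum fun j _ => ?_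
  refine mul_le_mul_of_nonneg_left ?_ (relLiab_nonneg hL j i)
  exact max_le (sub_le_self _ (le_max_right _ _)) (pbar_nonneg hL j)

/-- Upper bound for the clearing map. -/
def bound (L : Matrix (Fin n) (Fin (n + 1)) ℝ) (x : Fin n → ℝ) (i : Fin n) : ℝ :=
  x i + (∑ j, relLiab L j i * pbar L j) - pbar L i

lemma Psi_le_bound (hL : ∀ i j, 0 ≤ L i j) (hαx : αx ∈ Set.Icc (0:ℝ) 1)
    (hαL : αL ∈ Set.Icc (0:ℝ) 1) {x : Fin n → ℝ} (hx : ∀ i, 0 ≤ x i) (V : Fin n → ℝ) :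
    Psi L αx αL x V ≤ bound L x := by
  intro i
  rw [Psi_eq]
  unfold bound
  split
  · exact sub_le_sub_right (add_le_add_right (Sfun_le hL V i) _) _
  · refine sub_le_sub_right (add_le_add ?_ ?_) _
    · calc αx * x i ≤ 1 * x i := mul_le_mul_of_nonneg_right hαx.2 (hx i)
        _ = x i := one_mul _
    · calc αL * Sfun L V i ≤ 1 * Sfun L V i :=
            mul_le_mul_of_nonneg_right hαL.2 (Sfun_nonneg hL V i)
        _ ≤ ∑ j, relLiab L j i * pbar L j := by rw [one_mul]; exact Sfun_le hL V i

lemma Psi_mono (hL : ∀ i j, 0 ≤ L i j) (hαx : αx ∈ Set.Icc (0:ℝ) 1)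
    (hαL : αL ∈ Set.Icc (0:ℝ) 1) {x : Fin n → ℝ} (hx : ∀ i, 0 ≤ x i)
    {V V' : Fin n → ℝ} (h : V ≤ V') :
    Psi L αx αL x V ≤ Psi L αx αL x V' := by
  intro i
  rw [Psi_eq, Psi_eq]
  by_cases h1 : 0 ≤ V i
  · rw [if_pos h1, if_pos (h1.trans (h i))]
    exact sub_le_sub_right (add_le_add_right (Sfun_mono hL h i) _) _
  · rw [if_neg h1]
    by_cases h2 : 0 ≤ V' i
    · rw [if_pos h2]
      refine sub_le_sub_right (add_le_add ?_ ?_) _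
      · calc αx * x i ≤ 1 * x i := mul_le_mul_of_nonneg_right hαx.2 (hx i)
          _ = x i := one_mul _
      · calc αL * Sfun L V i ≤ 1 * Sfun L V i :=
              mul_le_mul_of_nonneg_right hαL.2 (Sfun_nonneg hL V i)
          _ = Sfun L V i := one_mul _
          _ ≤ Sfun L V' i := Sfun_mono hL h i
    · rw [if_neg h2]
      exact sub_le_sub_right
        (add_le_add_right (mul_le_mul_of_nonneg_left (Sfun_mono hL h i) hαL.1) _) _

/-- The decreasing iterates of the clearing map started from the upper bound. -/
def iterF (L : Matrix (Fin n) (Fin (n + 1)) ℝ) (αx αL : ℝ) :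
    ℕ → (Fin n → ℝ) → (Fin n → ℝ)
  | 0 => fun x => bound L x
  | (k+1) => fun x => Psi L αx αL x (iterF L αx αL k x)

lemma continuous_Sfun (i : Fin n) : Continuous fun V : Fin n → ℝ => Sfun L V i := by
  refine continuous_finset_sum _ fun j _ => ?_
  exact continuous_const.mul
    (((continuous_const.sub ((continuous_apply j).neg.max continuous_const)).max
      continuous_const))

lemma measurable_iterF (k : ℕ) : Measurable (iterF L αx αL k) := by
  induction k with
  | zero =>
    refine measurable_pi_lambda _ fun i => ?_
    exact ((measurable_pi_apply i).add_const _).sub_const _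
  | succ k ih =>
    refine measurable_pi_lambda _ fun i => ?_
    have hS : Measurable fun x => Sfun L (iterF L αx αL k x) i :=
      (continuous_Sfun i).measurable.comp ih
    have hcond : MeasurableSet {x : Fin n → ℝ | 0 ≤ iterF L αx αL k x i} :=
      measurableSet_le measurable_const ((measurable_pi_apply i).comp ih)
    simp only [iterF, Psi_eq]
    exact Measurable.ite hcond
      (((measurable_pi_apply i).add hS).sub_const _)
      ((((measurable_pi_apply i).const_mul αx).add (hS.const_mul αL)).sub_const _)

lemma key (hL : ∀ i j, 0 ≤ L i j) (hαx : αx ∈ Set.Icc (0:ℝ) 1)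
    (hαL : αL ∈ Set.Icc (0:ℝ) 1) (Vmap : (Fin n → ℝ) → (Fin n → ℝ))
    (hV : ∀ x : Fin n → ℝ, (∀ i, 0 ≤ x i) →
      IsGreatest {V | Psi L αx αL x V = V} (Vmap x))
    {x : Fin n → ℝ} (hx : ∀ i, 0 ≤ x i) :
    Tendsto (fun k => iterF L αx αL k x) atTop (𝓝 (Vmap x)) := by
  set f : ℕ → Fin n → ℝ := fun k => iterF L αx αL k x with hf
  have hfix0 : Psi L αx αL x (Vmap x) = Vmap x := (hV x hx).1
  -- decreasing
  have hdec : ∀ k, f (k+1) ≤ f k := by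
    intro k
    induction k with
    | zero => exact Psi_le_bound hL hαx hαL hx _
    | succ k ih => exact Psi_mono hL hαx hαL hx ih
  have hanti : ∀ i, Antitone fun k => f k i := fun i =>
    antitone_nat_of_succ_le fun k => hdec k i
  -- lower bound
  have hlow : ∀ k, Vmap x ≤ f k := by
    intro k
    induction k with
    | zero =>
      calc Vmap x = Psi L αx αL x (Vmap x) := hfix0.symm
        _ ≤ bound L x := Psi_le_bound hL hαx hαL hx _
    | succ k ih =>
      calc Vmap x = Psi L αx αL x (Vmap x) := hfix0.symm
        _ ≤ Psi L αx αL x (f k) := Psi_mono hL hαx hαL hx ih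
  set W : Fin n → ℝ := fun i => ⨅ k, f k i with hW
  have hbdd : ∀ i, BddBelow (Set.range fun k => f k i) :=
    fun i => ⟨Vmap x i, by rintro _ ⟨k, rfl⟩; exact hlow k i⟩
  have hWle : ∀ k, W ≤ f k := fun k i => ciInf_le (hbdd i) k
  have htend : ∀ i, Tendsto (fun k => f k i) atTop (𝓝 (W i)) := fun i =>
    tendsto_atTop_ciInf (hanti i) (hbdd i)
  have htendW : Tendsto f atTop (𝓝 W) := tendsto_pi_nhds.mpr htend
  -- Psi continuity along the sequence
  have hPsiTend : ∀ i, Tendsto (fun k => Psi L αx αL x (f k) i) atTop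
      (𝓝 (Psi L αx αL x W i)) := by
    intro i
    by_cases h0 : 0 ≤ W i
    · have heq : ∀ k, Psi L αx αL x (f k) i = x i + Sfun L (f k) i - pbar L i :=
        fun k => if_pos (h0.trans (hWle k i))
      have heqW : Psi L αx αL x W i = x i + Sfun L W i - pbar L i := if_pos h0
      simp only [heq, heqW]
      exact (((continuous_const.add (continuous_Sfun i)).sub continuous_const).tendsto W).comp
        htendW
    · push_neg at h0
      have hev : ∀ᶠ k in atTop, f k i < 0 := (htend i).eventually (gt_mem_nhds h0)
      have heqW : Psi L αx αL x W i = αx * x i + αL * Sfun L W i - pbar L i :=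
        if_neg (not_le.mpr h0)
      rw [heqW]
      refine Tendsto.congr'
        (hev.mono fun k hk => ?_)
        ((((continuous_const.add (continuous_const.mul (continuous_Sfun i))).sub
            continuous_const).tendsto W).comp htendW)
      exact (if_neg (not_le.mpr hk)).symm
  have hfixW : Psi L αx αL x W = W := by
    funext i
    have h1 : Tendsto (fun k => f (k+1) i) atTop (𝓝 (W i)) :=
      (htend i).comp (tendsto_add_atTop_nat 1)
    have h2 : (fun k => f (k+1) i) = fun k => Psi L αx αL x (f k) i := rfl
    rw [h2] at h1
    exact tendsto_nhds_unique (hPsiTend i) h1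
  have hVW : Vmap x = W := by
    refine le_antisymm (fun i => le_ciInf fun k => hlow k i) ((hV x hx).2 hfixW)
  rw [hVW]
  exact htendW

end ClearingAux

/-- The greatest clearing wealth map `x ↦ V(x)` is Borel measurable from `ℝⁿ₊` to `ℝⁿ`.
Consequently, for any measurable random endowment vector `X : Ω → ℝⁿ₊`, the random vectors
`V(X)`, `p(X) = p̄ − V(X)⁻` and `E(X) = V(X)⁺` are measurable. -/
theorem clearing_wealth_measurable (n : ℕ) (hn : 1 ≤ n)
    (L : Matrix (Fin n) (Fin (n + 1)) ℝ)
    (hL : ∀ i j, 0 ≤ L i j) (hLdiag : ∀ i : Fin n, L i i.castSucc = 0)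
    (αx αL : ℝ) (hαx : αx ∈ Set.Icc (0 : ℝ) 1) (hαL : αL ∈ Set.Icc (0 : ℝ) 1)
    (Vmap : (Fin n → ℝ) → (Fin n → ℝ))
    (hV : ∀ x : Fin n → ℝ, (∀ i, 0 ≤ x i) →
      IsGreatest {V | Psi L αx αL x V = V} (Vmap x)) :
    Measurable (fun x : {x : Fin n → ℝ // ∀ i, 0 ≤ x i} => Vmap x.val)
    ∧ (∀ (Ω : Type) (_ : MeasurableSpace Ω) (ℙ : Measure Ω),
        IsProbabilityMeasure ℙ →
        ∀ X : Ω → Fin n → ℝ, Measurable X → (∀ ω i, 0 ≤ X ω i) →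
          Measurable (fun ω => Vmap (X ω))
          ∧ Measurable (fun ω => fun i => pbar L i - max (-(Vmap (X ω) i)) 0)
          ∧ Measurable (fun ω => fun i => max (Vmap (X ω) i) 0)) := by
  have hmeas : Measurable (fun x : {x : Fin n → ℝ // ∀ i, 0 ≤ x i} => Vmap x.val) := by
    refine measurable_of_tendsto_metrizable
      (f := fun k (x : {x : Fin n → ℝ // ∀ i, 0 ≤ x i}) => ClearingAux.iterF L αx αL k x.val)
      (fun k => (ClearingAux.measurable_iterF k).comp measurable_subtype_coe) ?_
    rw [tendsto_pi_nhds]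
    intro x
    exact ClearingAux.key hL hαx hαL Vmap hV x.2
  refine ⟨hmeas, ?_⟩
  intro Ω _ ℙ _ X hX hX0
  have hVX : Measurable (fun ω => Vmap (X ω)) := by
    have : (fun ω => Vmap (X ω)) =
        (fun x : {x : Fin n → ℝ // ∀ i, 0 ≤ x i} => Vmap x.val) ∘
          (fun ω => (⟨X ω, hX0 ω⟩ : {x : Fin n → ℝ // ∀ i, 0 ≤ x i})) := rfl
    rw [this]
    exact hmeas.comp (hX.subtype_mk)
  refine ⟨hVX, ?_, ?_⟩
  · refine measurable_pi_lambda _ fun i => ?_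
    exact measurable_const.sub ((((measurable_pi_apply i).comp hVX).neg).max measurable_const)
  · refine measurable_pi_lambda _ fun i => ?_
    exact ((measurable_pi_apply i).comp hVX).max measurable_const
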